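/- Let Γ be a finite negative definite tree with intersection matrix I, and let a_{uw} = -det(-I)·(I^{-1})_{uw}. Let δ_w denote the degree of vertex w in Γ. Then for any vertex u, one has a_{uu} · Π_{w ∈ V(Γ)} a_{uw}^{δ_w - 2} = 1. -/

import Mathlib

open Matrix
set_option linter.unusedSectionVars false

section PosDefAux
variable {m n : Type*} [Fintype m] [Fintype n] [DecidableEq m] [DecidableEq n]

lemma posDef_submatrix_equiv {M : Matrix n n ℝ} (h : M.PosDef) (e : m ≃ n) :
    (M.submatrix e e).PosDef := by
  refine Matrix.PosDef.of_dotProduct_mulVec_pos ((isHermitian_submatrix_equiv e).mpr h.1) (fun x hx => ?_)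
  have hx' : x ∘ e.symm ≠ 0 := by
    intro h0
    apply hx
    funext i
    have := congrFun h0 (e i)
    simpa using this
  have := h.dotProduct_mulVec_pos (x := x ∘ e.symm) hx'
  rw [submatrix_mulVec_equiv]
  calc dotProduct (star x) ((M *ᵥ (x ∘ e.symm)) ∘ e)
      = dotProduct (star (x ∘ e.symm)) (M *ᵥ (x ∘ e.symm)) := by
        simp only [dotProduct, Function.comp_apply, Pi.star_apply]
        rw [← Equiv.sum_comp e (fun i => star (x (e.symm i)) * (M *ᵥ (x ∘ e.symm)) i)]
        simp [Function.comp]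
    _ > 0 := this

lemma posDef_diag_pos {M : Matrix n n ℝ} (h : M.PosDef) (i : n) : 0 < M i i := by
  have := h.dotProduct_mulVec_pos (x := Pi.single i 1) (by
    intro h0; have := congrFun h0 i; simp [Pi.single_eq_same] at this)
  simpa [dotProduct, mulVec, Pi.single_apply] using this

lemma posDef_schur₂₂ (A : Matrix m m ℝ) (B : Matrix m n ℝ) {D : Matrix n n ℝ}
    (hD : D.IsHermitian) [Invertible D]
    (h : (fromBlocks A B Bᴴ D).PosDef) : (A - B * D⁻¹ * Bᴴ).PosDef := by
  refine Matrix.PosDef.of_dotProduct_mulVec_pos ((Matrix.IsHermitian.fromBlocks₂₂ A B hD).mp h.1) (fun x hx => ?_)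
  set y : n → ℝ := -((D⁻¹ * Bᴴ) *ᵥ x) with hy
  have hxy : Sum.elim x y ≠ 0 := by
    intro h0
    apply hx
    funext i
    simpa using congrFun h0 (Sum.inl i)
  have h2 := h.dotProduct_mulVec_pos (x := Sum.elim x y) hxy
  rw [dotProduct_mulVec] at h2
  rw [Matrix.schur_complement_eq₂₂ A B x y hD] at h2
  have hz : (D⁻¹ * Bᴴ) *ᵥ x + y = 0 := by simp [hy]
  rw [hz] at h2
  simpa [dotProduct_mulVec] using h2

end PosDefAux

section MatrixAux
variable {K : Type*} [Field K] {V : Type*} [Fintype V] [DecidableEq V]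

/-- Equivalence V' ⊕ Unit ≃ V removing ℓ -/
def eqvErase (ℓ : V) : {x : V // x ≠ ℓ} ⊕ Unit ≃ V where
  toFun := Sum.elim Subtype.val fun _ => ℓ
  invFun x := if h : x = ℓ then Sum.inr () else Sum.inl ⟨x, h⟩
  left_inv := by
    rintro (⟨x, hx⟩ | t)
    · simp [hx]
    · simp
  right_inv x := by by_cases h : x = ℓ <;> simp [h]

/-- the Schur complement after removing row/column ℓ -/
def schurAt (N : Matrix V V K) (ℓ : V) : Matrix {x : V // x ≠ ℓ} {x : V // x ≠ ℓ} K :=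
  Matrix.of fun x y => N x y - N x ℓ * (N ℓ ℓ)⁻¹ * N ℓ y

lemma schurAt_apply (N : Matrix V V K) (ℓ : V) (x y : {x : V // x ≠ ℓ}) :
    schurAt N ℓ x y = N x y - N x ℓ * (N ℓ ℓ)⁻¹ * N ℓ y := rfl

section core
variable (N : Matrix V V K) (ℓ : V)

lemma eqvErase_inl (x : {x : V // x ≠ ℓ}) : eqvErase ℓ (Sum.inl x) = x.val := rfl
lemma eqvErase_inr (t : Unit) : eqvErase ℓ (Sum.inr t) = ℓ := rfl

/-- block form of the submatrix -/
lemma submatrix_eqvErase_eq :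
    N.submatrix (eqvErase ℓ) (eqvErase ℓ) =
      fromBlocks (Matrix.of fun x y : {x : V // x ≠ ℓ} => N x y)
        (Matrix.of fun (x : {x : V // x ≠ ℓ}) (_ : Unit) => N x ℓ)
        (Matrix.of fun (_ : Unit) (y : {x : V // x ≠ ℓ}) => N ℓ y)
        (Matrix.of fun (_ : Unit) (_ : Unit) => N ℓ ℓ) := by
  ext (x | x) (y | y) <;> rfl

variable (hDll : N ℓ ℓ ≠ 0) (hdetN : N.det ≠ 0)

lemma schurAt_eq_sub :
    schurAt N ℓ = (Matrix.of fun x y : {x : V // x ≠ ℓ} => N x y) -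
      (Matrix.of fun (x : {x : V // x ≠ ℓ}) (_ : Unit) => N x ℓ) *
      (Matrix.of fun (_ : Unit) (_ : Unit) => N ℓ ℓ)⁻¹ *
      (Matrix.of fun (_ : Unit) (y : {x : V // x ≠ ℓ}) => N ℓ y) := by
  have hinv : (Matrix.of fun (_ : Unit) (_ : Unit) => N ℓ ℓ)⁻¹ =
      Matrix.of fun (_ : Unit) (_ : Unit) => (N ℓ ℓ)⁻¹ := by
    rw [Matrix.inv_def]
    ext i j
    simp [Matrix.adjugate_subsingleton, Matrix.det_unique, Ring.inverse_eq_inv']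
  rw [hinv]
  ext x y
  simp only [schurAt_apply, Matrix.sub_apply, Matrix.mul_apply, Finset.univ_unique,
    Finset.sum_singleton, Matrix.of_apply]

include hDll in
lemma det_eq_schurAt : N.det = N ℓ ℓ * (schurAt N ℓ).det := by
  classical
  have hD : IsUnit (Matrix.of fun (_ : Unit) (_ : Unit) => N ℓ ℓ).det := by
    rw [Matrix.det_unique]
    exact (isUnit_iff_ne_zero.mpr hDll)
  haveI : Invertible (Matrix.of fun (_ : Unit) (_ : Unit) => N ℓ ℓ) :=
    (Matrix.isUnit_iff_isUnit_det _ |>.mpr hD).invertible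
  have h1 : N.det = (N.submatrix (eqvErase ℓ) (eqvErase ℓ)).det :=
    (Matrix.det_submatrix_equiv_self _ _).symm
  rw [h1, submatrix_eqvErase_eq, Matrix.det_fromBlocks₂₂, Matrix.det_unique]
  congr 1
  rw [invOf_eq_nonsing_inv, ← schurAt_eq_sub N ℓ]

end core

section core2
variable (N : Matrix V V K) (ℓ : V)

lemma adj_eq_det_mul_inv {W : Type*} [Fintype W] [DecidableEq W]
    (M : Matrix W W K) (h : M.det ≠ 0) (i j : W) :
    M.adjugate i j = M.det * M⁻¹ i j := by
  rw [Matrix.inv_def, Matrix.smul_apply, Ring.inverse_eq_inv', smul_eq_mul]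
  field_simp

lemma det_schurAt_ne (hDll : N ℓ ℓ ≠ 0) (hdetN : N.det ≠ 0) : (schurAt N ℓ).det ≠ 0 := by
  intro h
  rw [det_eq_schurAt N ℓ hDll, h, mul_zero] at hdetN
  exact hdetN rfl

lemma inv_entries (hDll : N ℓ ℓ ≠ 0) (hdetN : N.det ≠ 0) (x y : {v : V // v ≠ ℓ}) :
    N⁻¹ x.val y.val = (schurAt N ℓ)⁻¹ x y ∧
    N⁻¹ x.val ℓ = -(∑ z : {v : V // v ≠ ℓ},
      (schurAt N ℓ)⁻¹ x z * N z.val ℓ * (N ℓ ℓ)⁻¹) := by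
  classical
  set e := eqvErase (V := V) ℓ with he
  set A := (Matrix.of fun x y : {x : V // x ≠ ℓ} => N x y) with hA
  set Bc := (Matrix.of fun (x : {x : V // x ≠ ℓ}) (_ : Unit) => N x ℓ) with hBc
  set Br := (Matrix.of fun (_ : Unit) (y : {x : V // x ≠ ℓ}) => N ℓ y) with hBr
  set D := (Matrix.of fun (_ : Unit) (_ : Unit) => N ℓ ℓ) with hD
  haveI hDinv : Invertible D := by
    apply Matrix.invertibleOfIsUnitDet
    rw [Matrix.det_unique]
    exact isUnit_iff_ne_zero.mpr hDll
  haveI hNinv : Invertible N :=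
    Matrix.invertibleOfIsUnitDet _ (isUnit_iff_ne_zero.mpr hdetN)
  haveI hBlockInv : Invertible (fromBlocks A Bc Br D) := by
    rw [← submatrix_eqvErase_eq]
    exact Matrix.submatrixEquivInvertible N e e
  haveI hSInv : Invertible (A - Bc * ⅟D * Br) :=
    Matrix.invertibleOfFromBlocks₂₂Invertible A Bc Br D
  have hS : A - Bc * ⅟D * Br = schurAt N ℓ := by
    rw [invOf_eq_nonsing_inv]
    exact (schurAt_eq_sub N ℓ).symm
  have hDinvEntry : ∀ t t' : Unit, (⅟D) t t' = (N ℓ ℓ)⁻¹ := by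
    intro t t'
    rw [invOf_eq_nonsing_inv]
    rw [Matrix.inv_def]
    simp [hD, Matrix.adjugate_subsingleton, Matrix.det_unique, Ring.inverse_eq_inv']
  have hblock := Matrix.invOf_fromBlocks₂₂_eq A Bc Br D
  have hNB : ⅟(fromBlocks A Bc Br D) = N⁻¹.submatrix e e := by
    rw [invOf_eq_nonsing_inv, ← submatrix_eqvErase_eq, Matrix.inv_submatrix_equiv]
  rw [hNB] at hblock
  constructor
  · have h1 := congrFun (congrFun hblock (Sum.inl x)) (Sum.inl y)
    simp only [Matrix.submatrix_apply, Matrix.fromBlocks_apply₁₁] at h1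
    have h1' : N⁻¹ x.val y.val = (⅟(A - Bc * ⅟D * Br)) x y := h1
    rw [h1', invOf_eq_nonsing_inv, hS]
  · have h2 := congrFun (congrFun hblock (Sum.inl x)) (Sum.inr ())
    simp only [Matrix.submatrix_apply, Matrix.fromBlocks_apply₁₂] at h2
    have h2' : N⁻¹ x.val ℓ = (-(⅟(A - Bc * ⅟D * Br) * Bc * ⅟D)) x () := h2
    rw [h2']
    simp only [Matrix.neg_apply, Matrix.mul_apply, Finset.univ_unique, Finset.sum_singleton]
    congr 1
    rw [Finset.sum_mul]
    apply Finset.sum_congr rfl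
    intro z _
    rw [hDinvEntry, invOf_eq_nonsing_inv, hS]
    rfl
end core2

section core3
variable (N : Matrix V V K) (ℓ : V)

lemma adj_offblock (hDll : N ℓ ℓ ≠ 0) (hdetN : N.det ≠ 0) (x y : {v : V // v ≠ ℓ}) :
    N.adjugate x.val y.val = N ℓ ℓ * (schurAt N ℓ).adjugate x y := by
  have hdetS := det_schurAt_ne N ℓ hDll hdetN
  rw [adj_eq_det_mul_inv N hdetN, adj_eq_det_mul_inv _ hdetS,
    (inv_entries N ℓ hDll hdetN x y).1, det_eq_schurAt N ℓ hDll]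
  ring

lemma adj_col (hDll : N ℓ ℓ ≠ 0) (hdetN : N.det ≠ 0) {n₀ : V} (hn₀ : n₀ ≠ ℓ)
    (hcol : ∀ z : {v : V // v ≠ ℓ}, N z.val ℓ = if z.val = n₀ then -1 else 0)
    (x : {v : V // v ≠ ℓ}) :
    N.adjugate x.val ℓ = (schurAt N ℓ).adjugate x ⟨n₀, hn₀⟩ := by
  have hdetS := det_schurAt_ne N ℓ hDll hdetN
  have h2 := (inv_entries N ℓ hDll hdetN x x).2
  have hsum : ∑ z : {v : V // v ≠ ℓ}, (schurAt N ℓ)⁻¹ x z * N z.val ℓ * (N ℓ ℓ)⁻¹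
      = -((schurAt N ℓ)⁻¹ x ⟨n₀, hn₀⟩ * (N ℓ ℓ)⁻¹) := by
    rw [Finset.sum_eq_single ⟨n₀, hn₀⟩]
    · rw [hcol ⟨n₀, hn₀⟩]
      simp only [if_pos]
      ring
    · intro z _ hz
      rw [hcol z, if_neg, mul_zero, zero_mul]
      intro hc
      exact hz (Subtype.ext hc)
    · intro h
      exact absurd (Finset.mem_univ _) h
  rw [adj_eq_det_mul_inv N hdetN, adj_eq_det_mul_inv _ hdetS, h2, hsum,
    det_eq_schurAt N ℓ hDll]
  field_simp

end core3

section mapStuff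
variable {L : Type*} [Field L] (f : K →+* L)

lemma schurAt_map (N : Matrix V V K) (ℓ : V) :
    (schurAt N ℓ).map f = schurAt (N.map f) ℓ := by
  ext x y
  simp only [Matrix.map_apply, schurAt_apply, map_sub, _root_.map_mul, map_inv₀]

end mapStuff

section realStuff
variable {W : Type*} [Fintype W] [DecidableEq W]

lemma schurAt_posDef_real (N : Matrix W W ℝ) (ℓ : W) (hsym : ∀ a b, N a b = N b a)
    (hpos : N.PosDef) : (schurAt N ℓ).PosDef := by
  classical
  set e := eqvErase (V := W) ℓ with he
  set A := (Matrix.of fun x y : {x : W // x ≠ ℓ} => N x y) with hA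
  set Bc := (Matrix.of fun (x : {x : W // x ≠ ℓ}) (_ : Unit) => N x ℓ) with hBc
  set Br := (Matrix.of fun (_ : Unit) (y : {x : W // x ≠ ℓ}) => N ℓ y) with hBr
  set D := (Matrix.of fun (_ : Unit) (_ : Unit) => N ℓ ℓ) with hD
  have hDll : N ℓ ℓ ≠ 0 := (posDef_diag_pos hpos ℓ).ne'
  haveI : Invertible D := by
    apply Matrix.invertibleOfIsUnitDet
    rw [Matrix.det_unique]
    exact isUnit_iff_ne_zero.mpr hDll
  have hBrc : Br = Bcᴴ := by
    ext t y
    simp only [Matrix.conjTranspose_apply, Matrix.of_apply, star_trivial, hBr, hBc]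
    exact hsym ℓ y.val
  have hDherm : D.IsHermitian := by
    ext t t'
    simp [Matrix.conjTranspose_apply, hD]
  have hbig : (N.submatrix e e).PosDef := posDef_submatrix_equiv hpos e
  rw [he, submatrix_eqvErase_eq, ← hA, ← hBc, ← hBr, ← hD, hBrc] at hbig
  have hres := posDef_schur₂₂ A Bc hDherm hbig
  rw [show schurAt N ℓ = A - Bc * D⁻¹ * Bcᴴ from ?_]
  · exact hres
  · rw [schurAt_eq_sub N ℓ, ← hA, ← hBc, ← hBr, ← hD, hBrc]

end realStuff
end MatrixAux

section GraphAux
open Finset SimpleGraph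
variable {V : Type*} [Fintype V] [DecidableEq V] (G : SimpleGraph V) [DecidableRel G.Adj]

lemma degree_pos_of_conn (hc : G.Connected) (h2 : 2 ≤ Fintype.card V) (v : V) :
    0 < G.degree v := by
  obtain ⟨w, hw⟩ := Fintype.exists_ne_of_one_lt_card h2 v
  obtain ⟨p⟩ := hc.preconnected v w
  rw [G.degree_pos_iff_exists_adj]
  cases p with
  | nil => exact absurd rfl hw
  | cons h q => exact ⟨_, h⟩

lemma exists_leaf (hG : G.IsTree) (h2 : 2 ≤ Fintype.card V) (u : V) :
    ∃ ℓ, ℓ ≠ u ∧ G.degree ℓ = 1 := by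
  by_contra hcon
  push_neg at hcon
  have hdeg2 : ∀ ℓ ∈ univ.erase u, 2 ≤ G.degree ℓ := by
    intro ℓ hℓ
    rw [mem_erase] at hℓ
    have h1 := degree_pos_of_conn G hG.isConnected h2 ℓ
    have := hcon ℓ hℓ.1
    omega
  have hedge := hG.card_edgeFinset
  have hsum : ∑ v, G.degree v = 2 * #G.edgeFinset :=
    G.sum_degrees_eq_twice_card_edges
  have hsplit : ∑ v, G.degree v = G.degree u + ∑ v ∈ univ.erase u, G.degree v := by
    rw [← Finset.add_sum_erase _ _ (mem_univ u)]
  have hb : 2 * (univ.erase u).card ≤ ∑ v ∈ univ.erase u, G.degree v := by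
    calc 2 * (univ.erase u).card = ∑ _v ∈ univ.erase u, 2 := by rw [Finset.sum_const]; ring
    _ ≤ _ := Finset.sum_le_sum hdeg2
  have hcard : (univ.erase u).card = Fintype.card V - 1 := by
    rw [Finset.card_erase_of_mem (mem_univ u), Finset.card_univ]
  have hu := degree_pos_of_conn G hG.isConnected h2 u
  omega

omit [Fintype V] [DecidableEq V] in
lemma unique_nbr [Fintype V] [DecidableEq V] {ℓ : V} (h : G.degree ℓ = 1) :
    ∃ n₀, ∀ x, G.Adj ℓ x ↔ x = n₀ := by
  rw [← G.card_neighborFinset_eq_degree] at h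
  obtain ⟨n₀, hn⟩ := Finset.card_eq_one.mp h
  exact ⟨n₀, fun x => by rw [← SimpleGraph.mem_neighborFinset, hn, Finset.mem_singleton]⟩

lemma leaf_not_mem_path_support {x y ℓ : V} (hdeg : G.degree ℓ = 1) (hx : x ≠ ℓ) (hy : y ≠ ℓ)
    {p : G.Walk x y} (hp : p.IsPath) : ℓ ∉ p.support := by
  intro hmem
  obtain ⟨n₀, hn₀⟩ := unique_nbr G hdeg
  set q := p.takeUntil ℓ hmem with hq
  set r := p.dropUntil ℓ hmem with hr
  have hqn : ¬ q.reverse.Nil := by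
    rw [SimpleGraph.Walk.not_nil_iff_lt_length, SimpleGraph.Walk.length_reverse]
    rcases Nat.eq_zero_or_pos q.length with h0 | h0
    · exact absurd (SimpleGraph.Walk.eq_of_length_eq_zero h0) hx
    · exact h0
  obtain ⟨a, hadj_a, q', hq'⟩ := SimpleGraph.Walk.not_nil_iff.mp hqn
  have hrn : ¬ r.Nil := by
    rw [SimpleGraph.Walk.not_nil_iff_lt_length]
    rcases Nat.eq_zero_or_pos r.length with h0 | h0
    · exact absurd (SimpleGraph.Walk.eq_of_length_eq_zero h0).symm hy
    · exact h0
  obtain ⟨b, hadj_b, r', hr'⟩ := SimpleGraph.Walk.not_nil_iff.mp hrn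
  have ha : a = n₀ := (hn₀ a).mp hadj_a
  have hb : b = n₀ := (hn₀ b).mp hadj_b
  have haq : a ∈ q.support := by
    have : a ∈ q.reverse.support := by
      rw [hq', SimpleGraph.Walk.support_cons]
      exact List.mem_cons_of_mem _ q'.start_mem_support
    rwa [SimpleGraph.Walk.support_reverse, List.mem_reverse] at this
  have hbr : b ∈ r.support.tail := by
    rw [hr', SimpleGraph.Walk.support_cons]
    exact r'.start_mem_support
  have hnodup := hp.support_nodup
  rw [← SimpleGraph.Walk.take_spec p hmem, SimpleGraph.Walk.support_append] at hnodup
  have hdisj := List.disjoint_of_nodup_append hnodup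
  exact hdisj (ha ▸ haq) (hb ▸ hbr)

variable {ℓ : V}

lemma reachable_of_avoid {x y : V} (p : G.Walk x y) :
    ∀ (hx : x ≠ ℓ) (hy : y ≠ ℓ), ℓ ∉ p.support →
      (G.comap (Subtype.val : {v : V // v ≠ ℓ} → V)).Reachable ⟨x, hx⟩ ⟨y, hy⟩ := by
  induction p with
  | nil => intro hx hy _; exact SimpleGraph.Reachable.refl _
  | @cons u b w h q ih =>
    intro hx hy hp
    rw [SimpleGraph.Walk.support_cons] at hp
    have hℓq : ℓ ∉ q.support := fun hc => hp (List.mem_cons_of_mem _ hc)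
    have hb : b ≠ ℓ := fun hc => hℓq (hc ▸ q.start_mem_support)
    have h1 : (G.comap (Subtype.val : {v : V // v ≠ ℓ} → V)).Adj ⟨u, hx⟩ ⟨b, hb⟩ := h
    exact (SimpleGraph.Adj.reachable h1).trans (ih hb hy hℓq)

lemma tree_minus_leaf (hG : G.IsTree) (hdeg : G.degree ℓ = 1) (h2 : 2 ≤ Fintype.card V) :
    (G.comap (Subtype.val : {v : V // v ≠ ℓ} → V)).IsTree := by
  have hnempty : Nonempty {x : V // x ≠ ℓ} := by
    obtain ⟨w, hw⟩ := Fintype.exists_ne_of_one_lt_card h2 ℓ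
    exact ⟨⟨w, hw⟩⟩
  refine ⟨⟨fun x y => ?_⟩, ?_⟩
  · obtain ⟨p, hp⟩ := (hG.existsUnique_path x.val y.val).exists
    exact reachable_of_avoid G p x.2 y.2 (leaf_not_mem_path_support G hdeg x.2 y.2 hp)
  · intro x c hc
    have hmap := hc.map (f := (⟨Subtype.val, fun h => h⟩ :
      (G.comap (Subtype.val : {v : V // v ≠ ℓ} → V)) →g G)) Subtype.val_injective
    exact hG.IsAcyclic _ hmap

lemma Gm_degree (x : {v : V // v ≠ ℓ}) :
    (G.comap (Subtype.val : {v : V // v ≠ ℓ} → V)).degree x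
      = ((G.neighborFinset x.val).erase ℓ).card := by
  rw [← SimpleGraph.card_neighborFinset_eq_degree]
  rw [show ((G.neighborFinset x.val).erase ℓ) =
      ((G.comap (Subtype.val : {v : V // v ≠ ℓ} → V)).neighborFinset x).image Subtype.val from ?_]
  · rw [Finset.card_image_of_injective _ Subtype.val_injective]
  · ext w
    simp only [Finset.mem_erase, SimpleGraph.mem_neighborFinset, Finset.mem_image]
    constructor
    · rintro ⟨hw, hadj⟩
      exact ⟨⟨w, hw⟩, hadj, rfl⟩
    · rintro ⟨⟨w', hw'⟩, hadj, rfl⟩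
      exact ⟨hw', hadj⟩

end GraphAux

section ZpowAux
lemma prod_zpow_sum {ι : Type*} (s : Finset ι) {c : ℚ} (hc : c ≠ 0) (e : ι → ℤ) :
    ∏ i ∈ s, c ^ e i = c ^ (∑ i ∈ s, e i) := by
  classical
  induction s using Finset.induction with
  | empty => simp
  | @insert a s hx ih =>
    rw [Finset.prod_insert hx, Finset.sum_insert hx, zpow_add₀ hc, ih]
end ZpowAux

section MainLemma
open Finset SimpleGraph

universe u

lemma main_tree (n : ℕ) : ∀ (V : Type u) [Fintype V] [DecidableEq V],
    Fintype.card V = n →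
    ∀ (G : SimpleGraph V) [DecidableRel G.Adj], G.IsTree →
    ∀ (N : Matrix V V ℚ),
    (∀ u w : V, u ≠ w → N u w = if G.Adj u w then -1 else 0) →
    (N.map ((↑) : ℚ → ℝ)).PosDef →
    (∀ u w : V, 0 < N.adjugate u w) ∧
    (∀ u : V, N.adjugate u u * ∏ w : V, N.adjugate u w ^ ((G.degree w : ℤ) - 2) = 1) := by
  induction n using Nat.strong_induction_on with
  | _ n IH =>
  intro V _ _ hcard G _ hG N hN hpos
  haveI : Nonempty V := hG.isConnected.nonempty
  by_cases h1 : Fintype.card V = 1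
  · -- base case
    haveI : Subsingleton V := Fintype.card_le_one_iff_subsingleton.mp (le_of_eq h1)
    have hadj : N.adjugate = 1 := Matrix.adjugate_subsingleton N
    have hone : ∀ u w : V, N.adjugate u w = 1 := by
      intro u w
      rw [hadj, Subsingleton.elim w u, Matrix.one_apply_eq]
    constructor
    · intro u w; rw [hone u w]; norm_num
    · intro u
      simp [hone]
  · have h2 : 2 ≤ Fintype.card V := by
      have := Fintype.card_pos (α := V)
      omega
    have step : ∀ u : V, (∀ w : V, 0 < N.adjugate u w) ∧
        (N.adjugate u u * ∏ w : V, N.adjugate u w ^ ((G.degree w : ℤ) - 2) = 1) := by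
      intro u
      obtain ⟨ℓ, hℓu, hdegℓ⟩ := exists_leaf G hG h2 u
      obtain ⟨n₀, hn₀⟩ := unique_nbr G hdegℓ
      have hadjn : G.Adj ℓ n₀ := (hn₀ n₀).mpr rfl
      have hn₀ℓ : n₀ ≠ ℓ := fun hc => G.loopless.irrefl ℓ (hc ▸ hadjn)
      have hsym : ∀ a b : V, N a b = N b a := by
        intro a b
        by_cases hab : a = b
        · rw [hab]
        · rw [hN a b hab, hN b a (Ne.symm hab)]
          exact if_congr (G.adj_comm a b) rfl rfl
      -- determinant and diagonal facts
      have hmapdet : ((N.det : ℚ) : ℝ) = (N.map ((↑) : ℚ → ℝ)).det := by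
        have h := RingHom.map_det (Rat.castHom ℝ) N
        rw [RingHom.mapMatrix_apply] at h
        exact h
      have hdetpos : (0:ℝ) < ((N.det : ℚ) : ℝ) := by
        rw [hmapdet]; exact hpos.det_pos
      have hdetN : N.det ≠ 0 := by
        intro hc
        rw [hc] at hdetpos
        norm_num at hdetpos
      have hDllpos : 0 < N ℓ ℓ := by
        have := posDef_diag_pos hpos ℓ
        rw [Matrix.map_apply] at this
        exact_mod_cast this
      have hDll : N ℓ ℓ ≠ 0 := hDllpos.ne'
      have hcol : ∀ z : {v : V // v ≠ ℓ}, N z.val ℓ = if z.val = n₀ then -1 else 0 := by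
        intro z
        rw [hN z.val ℓ z.2]
        exact if_congr (by rw [G.adj_comm]; exact hn₀ z.val) rfl rfl
      -- the reduced graph and matrix
      set G' := G.comap (Subtype.val : {v : V // v ≠ ℓ} → V) with hG'def
      have hG' : G'.IsTree := tree_minus_leaf G hG hdegℓ h2
      set S := schurAt N ℓ with hSdef
      have hS_off : ∀ x y : {v : V // v ≠ ℓ}, x ≠ y →
          S x y = if G'.Adj x y then -1 else 0 := by
        intro x y hxy
        have hvals : x.val ≠ y.val := fun hc => hxy (Subtype.ext hc)
        have hzero : N x.val ℓ * (N ℓ ℓ)⁻¹ * N ℓ y.val = 0 := by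
          by_cases hx : x.val = n₀
          · have hy : y.val ≠ n₀ := fun hc => hvals (hx.trans hc.symm)
            rw [hsym ℓ y.val, hcol y, if_neg hy]
            ring
          · rw [hcol x, if_neg hx]
            ring
        rw [hSdef, schurAt_apply, hzero, sub_zero, hN x.val y.val hvals]
        exact if_congr Iff.rfl rfl rfl
      have hSpos : (S.map ((↑) : ℚ → ℝ)).PosDef := by
        have hmap : S.map ((↑) : ℚ → ℝ) = schurAt (N.map ((↑) : ℚ → ℝ)) ℓ :=
          schurAt_map (Rat.castHom ℝ) N ℓ
        rw [hmap]
        apply schurAt_posDef_real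
        · intro a b
          simp only [Matrix.map_apply]
          rw [hsym]
        · exact hpos
      have hcardV' : Fintype.card {v : V // v ≠ ℓ} = n - 1 := by
        have : Fintype.card {v : V // v ≠ ℓ} = Fintype.card V - 1 := by
          rw [Fintype.card_subtype, Finset.filter_ne', Finset.card_erase_of_mem (Finset.mem_univ ℓ),
            Finset.card_univ]
        omega
      have hlt : n - 1 < n := by omega
      obtain ⟨IH1, IH2⟩ := IH (n-1) hlt {v : V // v ≠ ℓ} hcardV' G' hG' S hS_off hSpos
      set u' : {v : V // v ≠ ℓ} := ⟨u, Ne.symm hℓu⟩ with hu'def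
      set n₀' : {v : V // v ≠ ℓ} := ⟨n₀, hn₀ℓ⟩ with hn₀'def
      set b : {v : V // v ≠ ℓ} → ℚ := fun x => S.adjugate u' x with hbdef
      set c : ℚ := N ℓ ℓ with hcdef
      have hb : ∀ x, 0 < b x := fun x => IH1 u' x
      have hAoff : ∀ x : {v : V // v ≠ ℓ}, N.adjugate u x = c * b x := by
        intro x
        exact adj_offblock N ℓ hDll hdetN u' x
      have hAcol : N.adjugate u ℓ = b n₀' := adj_col N ℓ hDll hdetN hn₀ℓ hcol u'
      constructor
      · -- positivity
        intro w
        by_cases hw : w = ℓ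
        · rw [hw, hAcol]; exact hb n₀'
        · have heq : N.adjugate u w = c * b ⟨w, hw⟩ := hAoff ⟨w, hw⟩
          rw [heq]
          exact mul_pos hDllpos (hb _)
      · -- the identity
        set e : {v : V // v ≠ ℓ} → ℤ := fun x => (G.degree x.val : ℤ) - 2 with hedef
        set e' : {v : V // v ≠ ℓ} → ℤ := fun x => (G'.degree x : ℤ) - 2 with he'def
        have hmemnbr : ∀ x : {v : V // v ≠ ℓ}, ℓ ∈ G.neighborFinset x.val ↔ x = n₀' := by
          intro x
          rw [SimpleGraph.mem_neighborFinset, G.adj_comm, hn₀ x.val]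
          constructor
          · intro h; exact Subtype.ext h
          · intro h; rw [h]
        have hdeg' : ∀ x : {v : V // v ≠ ℓ}, x ≠ n₀' → G'.degree x = G.degree x.val := by
          intro x hx
          rw [Gm_degree G x, Finset.erase_eq_of_notMem, SimpleGraph.card_neighborFinset_eq_degree]
          rw [hmemnbr x]
          exact hx
        have hdegn₀' : G'.degree n₀' + 1 = G.degree n₀ := by
          rw [Gm_degree G n₀', Finset.card_erase_of_mem ((hmemnbr n₀').mpr rfl)]
          have : 0 < (G.neighborFinset n₀).card := by
            rw [SimpleGraph.card_neighborFinset_eq_degree]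
            rw [SimpleGraph.degree_pos_iff_exists_adj]
            exact ⟨ℓ, G.adj_comm ℓ n₀ |>.mp hadjn⟩
          rw [SimpleGraph.card_neighborFinset_eq_degree] at *
          have hval : G.degree (n₀' : V) = G.degree n₀ := rfl
          omega
        have he'x : ∀ x, x ≠ n₀' → e' x = e x := by
          intro x hx
          rw [he'def, hedef]
          simp only
          rw [hdeg' x hx]
        have he'n : e n₀' = e' n₀' + 1 := by
          show ((G.degree (n₀' : V) : ℤ)) - 2 = ((G'.degree n₀' : ℤ) - 2) + 1
          have hval : G.degree (n₀' : V) = G.degree n₀ := rfl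
          omega
        -- sum of exponents
        have hsume : ∑ x : {v : V // v ≠ ℓ}, e x = -1 := by
          have hHS : ∑ w : V, G.degree w = 2 * #G.edgeFinset :=
            G.sum_degrees_eq_twice_card_edges
          have hEF : #G.edgeFinset + 1 = Fintype.card V := hG.card_edgeFinset
          have hsplit : ∑ w : V, G.degree w
              = G.degree ℓ + ∑ w ∈ univ.erase ℓ, G.degree w :=
            (Finset.add_sum_erase _ _ (mem_univ ℓ)).symm
          have hsub : ∑ w ∈ univ.erase ℓ, G.degree w
              = ∑ x : {v : V // v ≠ ℓ}, G.degree x.val :=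
            Finset.sum_subtype (univ.erase ℓ) (by simp) (fun w => G.degree w)
          have hcnt : (univ : Finset {v : V // v ≠ ℓ}).card = n - 1 := by
            rw [Finset.card_univ, hcardV']
          rw [hedef]
          rw [Finset.sum_sub_distrib, Finset.sum_const, hcnt]
          have : ∑ x : {v : V // v ≠ ℓ}, (G.degree x.val : ℤ)
              = ((∑ x : {v : V // v ≠ ℓ}, G.degree x.val : ℕ) : ℤ) := by
            push_cast
            rfl
          rw [this, ← hsub]
          have hcv : Fintype.card V = n := hcard
          have hcast : ((∑ w ∈ univ.erase ℓ, G.degree w : ℕ) : ℤ) = 2 * (n : ℤ) - 3 := by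
            omega
          rw [hcast]
          have hsmul : ((n - 1) • (2:ℤ)) = 2 * (n:ℤ) - 2 := by
            rw [nsmul_eq_mul]
            have h5 : ((n - 1 : ℕ) : ℤ) = (n:ℤ) - 1 := by omega
            rw [h5]; ring
          rw [hsmul]; ring
        -- assemble
        rw [← Finset.mul_prod_erase univ
          (fun w => N.adjugate u w ^ ((G.degree w : ℤ) - 2)) (mem_univ ℓ)]
        have herase : ∏ w ∈ univ.erase ℓ, N.adjugate u w ^ ((G.degree w : ℤ) - 2)
            = ∏ x : {v : V // v ≠ ℓ}, (c * b x) ^ e x := by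
          rw [Finset.prod_subtype (p := fun v : V => v ≠ ℓ) (univ.erase ℓ) (by simp)
            (fun w => N.adjugate u w ^ ((G.degree w : ℤ) - 2))]
          apply Finset.prod_congr rfl
          intro x _
          rw [hAoff x]
        have hsplit2 : ∏ x : {v : V // v ≠ ℓ}, (c * b x) ^ e x
            = c ^ (∑ x : {v : V // v ≠ ℓ}, e x) * ∏ x : {v : V // v ≠ ℓ}, b x ^ e x := by
          rw [← prod_zpow_sum univ hDll e, ← Finset.prod_mul_distrib]
          apply Finset.prod_congr rfl
          intro x _
          rw [mul_zpow]
        have hshift : ∏ x : {v : V // v ≠ ℓ}, b x ^ e x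
            = (∏ x : {v : V // v ≠ ℓ}, b x ^ e' x) * b n₀' := by
          rw [← Finset.mul_prod_erase univ (fun x => b x ^ e x) (mem_univ n₀'),
              ← Finset.mul_prod_erase univ (fun x => b x ^ e' x) (mem_univ n₀')]
          have hcongr : ∏ x ∈ univ.erase n₀', b x ^ e x
              = ∏ x ∈ univ.erase n₀', b x ^ e' x :=
            Finset.prod_congr rfl (fun x hx => by
              rw [he'x x (Finset.mem_erase.mp hx).1])
          rw [hcongr, he'n, zpow_add₀ (hb n₀').ne', zpow_one]
          ring
        have hfl : N.adjugate u ℓ ^ ((G.degree ℓ : ℤ) - 2) = (b n₀')⁻¹ := by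
          rw [hAcol, hdegℓ]
          norm_num
        have hAuu : N.adjugate u u = c * b u' := hAoff u'
        rw [hAuu, hfl, herase, hsplit2, hsume, hshift]
        have hIH2 : b u' * ∏ x : {v : V // v ≠ ℓ}, b x ^ e' x = 1 := IH2 u'
        have hbn : b n₀' ≠ 0 := (hb n₀').ne'
        rw [show c ^ (-1 : ℤ) = c⁻¹ from by rw [_root_.zpow_neg, zpow_one]]
        field_simp
        linear_combination hIH2
    exact ⟨fun u w => (step u).1 w, fun u => (step u).2⟩

end MainLemma

open BigOperators Matrix

theorem stmt10 (V : Type*) [Fintype V] [DecidableEq V]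
    (G : SimpleGraph V) [DecidableRel G.Adj] (hG : G.IsTree)
    (I : Matrix V V ℤ)
    (hoff : ∀ u w : V, u ≠ w → I u w = if G.Adj u w then 1 else 0)
    (hneg : Matrix.PosDef ((-I).map ((↑) : ℤ → ℝ)))
    (u : V) :
    (-(((-I).det : ℚ)) * ((I.map ((↑) : ℤ → ℚ))⁻¹ u u)) *
      ∏ w : V,
        (-(((-I).det : ℚ)) * ((I.map ((↑) : ℤ → ℚ))⁻¹ u w)) ^ ((G.degree w : ℤ) - 2)
      = 1 := by
  classical
  set J := I.map ((↑) : ℤ → ℚ) with hJ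
  set N := (-I).map ((↑) : ℤ → ℚ) with hNdef
  have hJN : J = -N := by
    ext i j
    simp [hJ, hNdef, Matrix.map_apply]
  have hmapmap : N.map ((↑) : ℚ → ℝ) = (-I).map ((↑) : ℤ → ℝ) := by
    ext i j
    rw [hNdef]
    simp [Matrix.map_apply]
  have hpos : (N.map ((↑) : ℚ → ℝ)).PosDef := by
    rw [hmapmap]; exact hneg
  have hoffN : ∀ a b : V, a ≠ b → N a b = if G.Adj a b then -1 else 0 := by
    intro a b hab
    rw [hNdef, Matrix.map_apply, Matrix.neg_apply, hoff a b hab]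
    split_ifs <;> norm_num
  obtain ⟨hpos1, hid⟩ := main_tree (Fintype.card V) V rfl G hG N hoffN hpos
  have hmapdet : ((N.det : ℚ) : ℝ) = (N.map ((↑) : ℚ → ℝ)).det := by
    have h := RingHom.map_det (Rat.castHom ℝ) N
    rw [RingHom.mapMatrix_apply] at h
    exact h
  have hdetN : N.det ≠ 0 := by
    intro hc
    have := hpos.det_pos
    rw [← hmapdet, hc] at this
    norm_num at this
  have hJinv : J⁻¹ = -(N⁻¹) := by
    rw [hJN]
    apply Matrix.inv_eq_right_inv
    rw [Matrix.neg_mul, Matrix.mul_neg, neg_neg]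
    exact Matrix.mul_nonsing_inv N (isUnit_iff_ne_zero.mpr hdetN)
  have hdet : ((-I).det : ℚ) = N.det := by
    have h := RingHom.map_det (Int.castRingHom ℚ) (-I)
    rw [RingHom.mapMatrix_apply] at h
    simp only [Int.coe_castRingHom] at h
    rw [hNdef]
    exact h
  have hrw : ∀ w : V, -(((-I).det : ℚ)) * (J⁻¹ u w) = N.adjugate u w := by
    intro w
    rw [hJinv, Matrix.neg_apply, hdet, adj_eq_det_mul_inv N hdetN]
    ring
  simp only [hrw]
  exact hid u
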